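/- Let a < b be real numbers. Let λ : ℝ → ℝ be continuously differentiable and strictly positive on [a,b], and let λ_θ : ℝ → ℝ be twice continuously differentiable and strictly positive on [a,b]. Define q(t) = λ(t)·exp(−∫_a^t λ(s) ds), ψ(t) = λ'(t)/λ(t) − λ(t), and ψ_θ(t) = λ_θ'(t)/λ_θ(t) − λ_θ(t). Then (1/2)·∫_a^b q(t)·(ψ(t) − ψ_θ(t))² dt = ∫_a^b q(t)·((1/2)·ψ_θ(t)² + ψ_θ'(t)) dt + (1/2)·∫_a^b q(t)·ψ(t)² dt + q(a)·ψ_θ(a) − q(b)·ψ_θ(b). In particular, the explicit score-matching objective (left-hand side) differs from the implicit one (first term on the right) by a constant not depending on λ_θ only when the two boundary terms q(a)·ψ_θ(a) − q(b)·ψ_θ(b) do not depend on λ_θ. -/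

import Mathlib

open MeasureTheory Real Set intervalIntegral

/-- Single-conditional relation between explicit and implicit (autoregressive)
score matching.  With `q t = lam t * exp (-∫_a^t lam)`, data score
`ψ t = lam' t / lam t - lam t`, model score `ψθ t = lamθ' t / lamθ t - lamθ t`
(whose derivative is `lamθ'' t / lamθ t - (lamθ' t / lamθ t)^2 - lamθ' t`), we have
`(1/2)∫ q (ψ - ψθ)² = ∫ q ((1/2)ψθ² + ψθ') + (1/2)∫ q ψ² + q(a)ψθ(a) - q(b)ψθ(b)`. -/
theorem stmt_3 (a b : ℝ) (hab : a < b)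
    (lam lam' lamθ lamθ' lamθ'' : ℝ → ℝ)
    (hlam : ∀ t ∈ Set.Icc a b, HasDerivAt lam (lam' t) t)
    (hlam'c : ContinuousOn lam' (Set.Icc a b))
    (hlampos : ∀ t ∈ Set.Icc a b, 0 < lam t)
    (hlamθ : ∀ t ∈ Set.Icc a b, HasDerivAt lamθ (lamθ' t) t)
    (hlamθ' : ∀ t ∈ Set.Icc a b, HasDerivAt lamθ' (lamθ'' t) t)
    (hlamθ''c : ContinuousOn lamθ'' (Set.Icc a b))
    (hlamθpos : ∀ t ∈ Set.Icc a b, 0 < lamθ t) :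
    (1/2) * ∫ t in a..b,
        (lam t * Real.exp (-(∫ s in a..t, lam s))) *
          ((lam' t / lam t - lam t) - (lamθ' t / lamθ t - lamθ t))^2
    = (∫ t in a..b,
        (lam t * Real.exp (-(∫ s in a..t, lam s))) *
          ((1/2) * (lamθ' t / lamθ t - lamθ t)^2
            + (lamθ'' t / lamθ t - (lamθ' t / lamθ t)^2 - lamθ' t)))
      + (1/2) * (∫ t in a..b,
          (lam t * Real.exp (-(∫ s in a..t, lam s))) * (lam' t / lam t - lam t)^2)
      + (lam a * Real.exp (-(∫ s in a..a, lam s))) * (lamθ' a / lamθ a - lamθ a)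
      - (lam b * Real.exp (-(∫ s in a..b, lam s))) * (lamθ' b / lamθ b - lamθ b) := by
  have hle : a ≤ b := hab.le
  have huIcc : Set.uIcc a b = Set.Icc a b := Set.uIcc_of_le hle
  -- continuity of the basic functions on [a,b]
  have hlamc : ContinuousOn lam (Set.Icc a b) := fun t ht =>
    (hlam t ht).continuousAt.continuousWithinAt
  have hlamθc : ContinuousOn lamθ (Set.Icc a b) := fun t ht =>
    (hlamθ t ht).continuousAt.continuousWithinAt
  have hlamθ'c : ContinuousOn lamθ' (Set.Icc a b) := fun t ht =>
    (hlamθ' t ht).continuousAt.continuousWithinAt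
  set I : ℝ → ℝ := fun t => ∫ s in a..t, lam s with hIdef
  have hlamInt : IntervalIntegrable lam MeasureTheory.volume a b := by
    rw [intervalIntegrable_iff_integrableOn_Icc_of_le hle]
    exact hlamc.integrableOn_compact isCompact_Icc
  have hIcont : ContinuousOn I (Set.Icc a b) := by
    rw [← huIcc]
    exact intervalIntegral.continuousOn_primitive_interval' hlamInt
      (by rw [huIcc]; exact Set.left_mem_Icc.2 hle)
  -- q
  set q : ℝ → ℝ := fun t => lam t * Real.exp (-(I t)) with hqdef
  have hqcont : ContinuousOn q (Set.Icc a b) :=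
    hlamc.mul ((Real.continuous_exp.comp_continuousOn hIcont.neg))
  set ψ : ℝ → ℝ := fun t => lam' t / lam t - lam t with hψdef
  set ψθ : ℝ → ℝ := fun t => lamθ' t / lamθ t - lamθ t with hψθdef
  set D : ℝ → ℝ := fun t => lamθ'' t / lamθ t - (lamθ' t / lamθ t)^2 - lamθ' t with hDdef
  have hψcont : ContinuousOn ψ (Set.Icc a b) :=
    ((hlam'c.div hlamc (fun t ht => (hlampos t ht).ne')).sub hlamc)
  have hψθcont : ContinuousOn ψθ (Set.Icc a b) :=
    ((hlamθ'c.div hlamθc (fun t ht => (hlamθpos t ht).ne')).sub hlamθc)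
  have hDcont : ContinuousOn D (Set.Icc a b) :=
    (((hlamθ''c.div hlamθc (fun t ht => (hlamθpos t ht).ne')).sub
      ((hlamθ'c.div hlamθc (fun t ht => (hlamθpos t ht).ne')).pow 2)).sub hlamθ'c)
  -- derivative of I on the open interval
  have hlamOpen : ContinuousOn lam (Set.Ioo a b) :=
    hlamc.mono Set.Ioo_subset_Icc_self
  have hIderiv : ∀ t ∈ Set.Ioo a b, HasDerivAt I (lam t) t := by
    intro t ht
    have htIcc : t ∈ Set.Icc a b := Set.Ioo_subset_Icc_self ht
    have hInt : IntervalIntegrable lam MeasureTheory.volume a t :=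
      hlamInt.mono_set (by rw [huIcc, Set.uIcc_of_le htIcc.1]; exact Set.Icc_subset_Icc le_rfl htIcc.2)
    exact intervalIntegral.integral_hasDerivAt_right hInt
      (ContinuousOn.stronglyMeasurableAtFilter isOpen_Ioo hlamOpen t ht)
      (hlam t htIcc).continuousAt
  -- derivative of q ψθ on the open interval
  have hFderiv : ∀ t ∈ Set.Ioo a b, HasDerivAt (fun u => q u * ψθ u)
      (q t * (ψ t * ψθ t + D t)) t := by
    intro t ht
    have htIcc : t ∈ Set.Icc a b := Set.Ioo_subset_Icc_self ht
    have hlamne : lam t ≠ 0 := (hlampos t htIcc).ne'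
    have hlamθne : lamθ t ≠ 0 := (hlamθpos t htIcc).ne'
    have hexp : HasDerivAt (fun u => Real.exp (-(I u)))
        (Real.exp (-(I t)) * (-(lam t))) t := ((hIderiv t ht).neg).exp
    have hq' : HasDerivAt q (lam' t * Real.exp (-(I t)) +
        lam t * (Real.exp (-(I t)) * (-(lam t)))) t := (hlam t htIcc).mul hexp
    have hψθ' : HasDerivAt ψθ (((lamθ'' t * lamθ t - lamθ' t * lamθ' t) / (lamθ t)^2)
        - lamθ' t) t := (((hlamθ' t htIcc).div (hlamθ t htIcc) hlamθne).sub (hlamθ t htIcc))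
    have := hq'.mul hψθ'
    convert this using 1
    case e'_4 => rfl
    case e'_5 => rfl
    case e'_8 => rfl
    simp only [hqdef, hψdef, hψθdef, hDdef]
    field_simp
    ring
  have key : (∫ t in a..b, q t * (ψ t * ψθ t + D t))
      = q b * ψθ b - q a * ψθ a := by
    apply intervalIntegral.integral_eq_sub_of_hasDeriv_right_of_le hle
      (hqcont.mul hψθcont)
      (fun t ht => (hFderiv t ht).hasDerivWithinAt)
    rw [intervalIntegrable_iff_integrableOn_Icc_of_le hle]
    exact ((hqcont.mul ((hψcont.mul hψθcont).add hDcont))).integrableOn_compact isCompact_Icc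
  -- integrability of the three integrands
  have hint1 : IntervalIntegrable (fun t => q t * (ψ t - ψθ t)^2) MeasureTheory.volume a b := by
    rw [intervalIntegrable_iff_integrableOn_Icc_of_le hle]
    exact (hqcont.mul ((hψcont.sub hψθcont).pow 2)).integrableOn_compact isCompact_Icc
  have hint2 : IntervalIntegrable (fun t => q t * ((1/2) * (ψθ t)^2 + D t))
      MeasureTheory.volume a b := by
    rw [intervalIntegrable_iff_integrableOn_Icc_of_le hle]
    exact (hqcont.mul ((continuousOn_const.mul (hψθcont.pow 2)).add hDcont)).integrableOn_compact
      isCompact_Icc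
  have hint3 : IntervalIntegrable (fun t => q t * (ψ t)^2) MeasureTheory.volume a b := by
    rw [intervalIntegrable_iff_integrableOn_Icc_of_le hle]
    exact (hqcont.mul (hψcont.pow 2)).integrableOn_compact isCompact_Icc
  -- rewrite the goal in terms of q, ψ, ψθ, D
  show (1/2) * ∫ t in a..b, q t * (ψ t - ψθ t)^2
    = (∫ t in a..b, q t * ((1/2) * (ψθ t)^2 + D t))
      + (1/2) * (∫ t in a..b, q t * (ψ t)^2) + q a * ψθ a - q b * ψθ b
  have combine : (1/2) * (∫ t in a..b, q t * (ψ t - ψθ t)^2)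
      - (∫ t in a..b, q t * ((1/2) * (ψθ t)^2 + D t))
      - (1/2) * (∫ t in a..b, q t * (ψ t)^2)
      = ∫ t in a..b, ((1/2) * (q t * (ψ t - ψθ t)^2)
          - q t * ((1/2) * (ψθ t)^2 + D t) - (1/2) * (q t * (ψ t)^2)) := by
    rw [intervalIntegral.integral_sub ((hint1.const_mul (1/2)).sub hint2) (hint3.const_mul (1/2)),
      intervalIntegral.integral_sub (hint1.const_mul (1/2)) hint2,
      intervalIntegral.integral_const_mul, intervalIntegral.integral_const_mul]
  have pointwise : ∀ t, (1/2) * (q t * (ψ t - ψθ t)^2)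
      - q t * ((1/2) * (ψθ t)^2 + D t) - (1/2) * (q t * (ψ t)^2)
      = -(q t * (ψ t * ψθ t + D t)) := by
    intro t; ring
  rw [intervalIntegral.integral_congr (fun t _ => pointwise t),
    intervalIntegral.integral_neg, key] at combine
  linarith [combine]
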